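/- If f is holomorphic with f' ≠ 0 and q = S(f), then B_q[(F∘f)/f', (G∘f)/f'] = B_0[F,G]∘f, where B_q[F,G] = F''G + FG'' − F'G' + 2qFG and B_0 is the case q = 0. -/

import Mathlib

/-- The bilinear form `B_q[F,G] = F''G + FG'' − F'G' + 2qFG`. -/
noncomputable def Bform (q F G : ℂ → ℂ) (z : ℂ) : ℂ :=
  deriv (deriv F) z * G z + F z * deriv (deriv G) z
    - deriv F z * deriv G z + 2 * q z * F z * G z

/-- The Schwarzian derivative `S(f) = f'''/f' - (3/2)(f''/f')²`. -/
noncomputable def schwarzian (f : ℂ → ℂ) (z : ℂ) : ℂ :=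
  deriv (deriv (deriv f)) z / deriv f z - (3/2) * (deriv (deriv f) z / deriv f z) ^ 2

lemma deriv_differentiable {g : ℂ → ℂ} (hg : Differentiable ℂ g) :
    Differentiable ℂ (deriv g) := by
  have h : AnalyticOnNhd ℂ g Set.univ := fun z _ => hg.analyticAt z
  exact fun z => (h.deriv z (Set.mem_univ z)).differentiableAt

lemma first_deriv (f F : ℂ → ℂ) (hf : Differentiable ℂ f) (hf' : ∀ z, deriv f z ≠ 0)
    (hF : Differentiable ℂ F) :
    deriv (fun w => F (f w) / deriv f w)
      = fun z => (deriv F (f z) * deriv f z * deriv f z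
          - F (f z) * deriv (deriv f) z) / (deriv f z) ^ 2 := by
  funext z
  have hcomp : HasDerivAt (fun w => F (f w)) (deriv F (f z) * deriv f z) z :=
    (hF.differentiableAt.hasDerivAt (x := f z)).comp z (hf.differentiableAt.hasDerivAt)
  have hd : HasDerivAt (deriv f) (deriv (deriv f) z) z :=
    ((deriv_differentiable hf).differentiableAt).hasDerivAt
  have := hcomp.div hd (hf' z)
  exact this.deriv

lemma second_deriv (f F : ℂ → ℂ) (hf : Differentiable ℂ f) (hf' : ∀ z, deriv f z ≠ 0)
    (hF : Differentiable ℂ F) (z : ℂ) :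
    deriv (deriv (fun w => F (f w) / deriv f w)) z
      = (((deriv (deriv F) (f z) * deriv f z * deriv f z
            + deriv F (f z) * deriv (deriv f) z) * deriv f z
            + deriv F (f z) * deriv f z * deriv (deriv f) z
          - (deriv F (f z) * deriv f z * deriv (deriv f) z
            + F (f z) * deriv (deriv (deriv f)) z)) * (deriv f z) ^ 2
        - (deriv F (f z) * deriv f z * deriv f z - F (f z) * deriv (deriv f) z)
            * (2 * deriv f z * deriv (deriv f) z)) / ((deriv f z) ^ 2) ^ 2 := by
  rw [first_deriv f F hf hf' hF]
  have hf1 : Differentiable ℂ (deriv f) := deriv_differentiable hf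
  have hf2 : Differentiable ℂ (deriv (deriv f)) := deriv_differentiable hf1
  have hF1 : Differentiable ℂ (deriv F) := deriv_differentiable hF
  have hF'comp : HasDerivAt (fun w => deriv F (f w))
      (deriv (deriv F) (f z) * deriv f z) z :=
    (hF1.differentiableAt.hasDerivAt (x := f z)).comp z hf.differentiableAt.hasDerivAt
  have hFcomp : HasDerivAt (fun w => F (f w)) (deriv F (f z) * deriv f z) z :=
    (hF.differentiableAt.hasDerivAt (x := f z)).comp z hf.differentiableAt.hasDerivAt
  have hN : HasDerivAt
      (fun w => deriv F (f w) * deriv f w * deriv f w - F (f w) * deriv (deriv f) w)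
      ((deriv (deriv F) (f z) * deriv f z * deriv f z
          + deriv F (f z) * deriv (deriv f) z) * deriv f z
          + deriv F (f z) * deriv f z * deriv (deriv f) z
        - (deriv F (f z) * deriv f z * deriv (deriv f) z
          + F (f z) * deriv (deriv (deriv f)) z)) z := by
    exact ((hF'comp.mul hf1.differentiableAt.hasDerivAt).mul
        hf1.differentiableAt.hasDerivAt).sub
      (hFcomp.mul hf2.differentiableAt.hasDerivAt)
  have hD : HasDerivAt (fun w => (deriv f w) ^ 2)
      (2 * deriv f z * deriv (deriv f) z) z := by
    have := (hf1.differentiableAt.hasDerivAt (x := z)).pow 2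
    simpa [mul_comm, mul_assoc] using (show HasDerivAt (fun w => deriv f w ^ 2) _ z from this)
  have hDne : (deriv f z) ^ 2 ≠ 0 := pow_ne_zero 2 (hf' z)
  exact (hN.div hD hDne).deriv

/-- If `q = S(f)`, then `B_q[(F∘f)/f', (G∘f)/f'] = B₀[F,G] ∘ f`. -/
theorem Bform_schwarzian_invariance (f F G : ℂ → ℂ)
    (hf : Differentiable ℂ f) (hf' : ∀ z, deriv f z ≠ 0)
    (hF : Differentiable ℂ F) (hG : Differentiable ℂ G) :
    ∀ z, Bform (schwarzian f)
        (fun w => F (f w) / deriv f w) (fun w => G (f w) / deriv f w) z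
      = Bform (fun _ => 0) F G (f z) := by
  intro z
  have e1F := first_deriv f F hf hf' hF
  have e1G := first_deriv f G hf hf' hG
  have e2F := second_deriv f F hf hf' hF z
  have e2G := second_deriv f G hf hf' hG z
  simp only [Bform, schwarzian, e2F, e2G]
  rw [e1F, e1G]
  have h1 := hf' z
  field_simp
  ring
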